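/- Let P be a finite bounded poset with |P| > 1. The image Antb(P) of the blocker map is a meet-subsemilattice of the lattice Ant(P): if B₁, B₂ ∈ Antb(P), then B₁ ∧ B₂ (the meet in Ant(P), namely min(F(B₁) ∩ F(B₂))) also belongs to Antb(P); in fact B₁ ∧ B₂ = b(b(B₁) ∨ b(B₂)). -/

import Mathlib

open scoped Classical
open Set

/-- The order filter generated by a subset. -/
def upFilter (P : Type*) [Preorder P] (S : Set P) : Set P := {x | ∃ s ∈ S, s ≤ x}

/-- The set of minimal elements of a subset. -/
def minsOf (P : Type*) [Preorder P] (S : Set P) : Set P := {x | Minimal (· ∈ S) x}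

/-- The set of intersecters for `A` in `P`. -/
def inters (P : Type*) [PartialOrder P] [OrderBot P] (A : Set P) : Set P :=
  if A = ∅ then Set.univ
  else if A = {(⊥ : P)} then ∅
  else {b | ∀ a ∈ A, a ≠ ⊥ → ∃ z : P, IsAtom z ∧ z ≤ b ∧ z ≤ a}

/-- The set of complementers for `A` in `P`. -/
def compls (P : Type*) [PartialOrder P] [OrderBot P] (A : Set P) : Set P := (inters P A)ᶜ

/-- The blocker map: the set of minimal intersecters for `A` in `P`. -/
def bmap (P : Type*) [PartialOrder P] [OrderBot P] (A : Set P) : Set P := minsOf P (inters P A)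

/-- The unguarded version of `inters`. -/
def J (P : Type*) [PartialOrder P] [OrderBot P] (A : Set P) : Set P :=
  {b | ∀ a ∈ A, a ≠ ⊥ → ∃ z : P, IsAtom z ∧ z ≤ b ∧ z ≤ a}

section Lemmas
variable {P : Type*} [PartialOrder P] [OrderBot P]

lemma inters_empty : inters P (∅ : Set P) = Set.univ := by simp [inters]

lemma inters_bot : inters P ({⊥} : Set P) = ∅ := by
  have : ({⊥} : Set P) ≠ ∅ := Set.singleton_ne_empty _
  simp [inters, this]

lemma inters_eq_J {A : Set P} (h1 : A ≠ ∅) (h2 : A ≠ {⊥}) : inters P A = J P A := by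
  simp [inters, J, h1, h2]

lemma J_antitone {S T : Set P} (h : S ⊆ T) : J P T ⊆ J P S :=
  fun _ hx a ha => hx a (h ha)

lemma J_union (S T : Set P) : J P (S ∪ T) = J P S ∩ J P T := by
  ext x
  constructor
  · intro hx
    exact ⟨fun a ha => hx a (Or.inl ha), fun a ha => hx a (Or.inr ha)⟩
  · rintro ⟨h1, h2⟩ a (ha | ha) hb
    · exact h1 a ha hb
    · exact h2 a ha hb

lemma subset_JJ (S : Set P) : S \ {⊥} ⊆ J P (J P S) := by
  rintro s ⟨hs, hsb⟩ a ha hab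
  obtain ⟨z, hz, hza, hzs⟩ := ha s hs (by simpa using hsb)
  exact ⟨z, hz, hzs, hza⟩

lemma bot_not_mem_J {S : Set P} (h : ∃ s ∈ S, s ≠ ⊥) : ⊥ ∉ J P S := by
  obtain ⟨s, hs, hsb⟩ := h
  intro hbot
  obtain ⟨z, hz, hzb, -⟩ := hbot s hs hsb
  exact hz.1 (le_bot_iff.mp hzb)

lemma J_diff_bot (S : Set P) : J P (S \ {⊥}) = J P S := by
  ext x
  constructor
  · intro hx a ha hab
    exact hx a ⟨ha, by simpa using hab⟩ hab
  · intro hx a ha hab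
    exact hx a ha.1 hab

lemma JJJ {S : Set P} (h : ∃ s ∈ S, s ≠ ⊥) : J P (J P (J P S)) = J P S := by
  apply subset_antisymm
  · calc J P (J P (J P S)) ⊆ J P (S \ {⊥}) := J_antitone (subset_JJ S)
      _ = J P S := J_diff_bot S
  · intro x hx
    exact subset_JJ (J P S) ⟨hx, fun hb => bot_not_mem_J h (Set.mem_singleton_iff.mp hb ▸ hx)⟩

lemma J_upset {S : Set P} {x y : P} (hx : x ∈ J P S) (hxy : x ≤ y) : y ∈ J P S := by
  intro a ha hab
  obtain ⟨z, hz, hzx, hza⟩ := hx a ha hab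
  exact ⟨z, hz, hzx.trans hxy, hza⟩

lemma inters_upset {S : Set P} {x y : P} (hx : x ∈ inters P S) (hxy : x ≤ y) :
    y ∈ inters P S := by
  unfold inters at *
  split_ifs at * with h1 h2
  · trivial
  · exact absurd hx (Set.notMem_empty x)
  · exact J_upset hx hxy

lemma minsOf_subset (S : Set P) : minsOf P S ⊆ S := fun _ hx => hx.1

lemma minsOf_antichain (S : Set P) : IsAntichain (· ≤ ·) (minsOf P S) := by
  intro x hx y hy hxy hle
  exact hxy (le_antisymm hle (hy.2 hx.1 hle))

lemma minsOf_of_antichain {A : Set P} (hA : IsAntichain (· ≤ ·) A) : minsOf P A = A := by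
  apply subset_antisymm (minsOf_subset A)
  intro a ha
  refine ⟨ha, fun y hy hle => ?_⟩
  rcases eq_or_ne y a with rfl | hne
  · exact hle
  · exact absurd hle (hA hy ha hne)

lemma minsOf_bot_mem {S : Set P} (h : ⊥ ∈ S) : minsOf P S = {⊥} := by
  ext x
  simp only [Set.mem_singleton_iff]
  constructor
  · intro hx
    exact le_antisymm (hx.2 h bot_le) bot_le
  · rintro rfl
    exact ⟨h, fun y _ _ => bot_le⟩

lemma minsOf_empty : minsOf P (∅ : Set P) = ∅ := by
  ext x; simp [minsOf, Minimal]

lemma bmap_empty : bmap P (∅ : Set P) = {⊥} := by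
  rw [bmap, inters_empty, minsOf_bot_mem (Set.mem_univ _)]

lemma bmap_bot : bmap P ({⊥} : Set P) = ∅ := by
  rw [bmap, inters_bot, minsOf_empty]

section Finite
variable [Fintype P]

lemma exists_minimal_le_of_mem {S : Set P} {x : P} (hx : x ∈ S) :
    ∃ y ∈ minsOf P S, y ≤ x := by
  obtain ⟨b, hb, hmin⟩ := exists_minimal_le_of_wellFoundedLT (· ∈ S) x hx
  exact ⟨b, hmin, hb⟩

lemma upFilter_minsOf_of_upset {U : Set P}
    (hU : ∀ x ∈ U, ∀ y, x ≤ y → y ∈ U) : upFilter P (minsOf P U) = U := by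
  ext x
  constructor
  · rintro ⟨s, hs, hsx⟩
    exact hU s (minsOf_subset U hs) x hsx
  · intro hx
    obtain ⟨y, hy, hyx⟩ := exists_minimal_le_of_mem hx
    exact ⟨y, hy, hyx⟩

lemma J_minsOf {S : Set P} (hb : ⊥ ∉ S) : J P (minsOf P S) = J P S := by
  apply subset_antisymm
  · intro x hx a ha hab
    obtain ⟨a', ha', ha'a⟩ := exists_minimal_le_of_mem ha
    obtain ⟨z, hz, hzx, hza'⟩ := hx a' ha'
      (fun h => hb (h ▸ minsOf_subset S ha'))
    exact ⟨z, hz, hzx, hza'.trans ha'a⟩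
  · exact J_antitone (minsOf_subset S)

lemma exists_atom_le {a : P} (ha : a ≠ ⊥) : ∃ z : P, IsAtom z ∧ z ≤ a :=
  (IsAtomic.eq_bot_or_exists_atom_le a).resolve_left ha

lemma top_mem_J [OrderTop P] (S : Set P) : (⊤ : P) ∈ J P S := by
  intro a _ hab
  obtain ⟨z, hz, hza⟩ := exists_atom_le hab
  exact ⟨z, hz, le_top, hza⟩

end Finite
end Lemmas

section Main
variable {P : Type*} [PartialOrder P] [BoundedOrder P] [Fintype P] [Nontrivial P]

/-- The three possible shapes of an element of the image of the blocker map. -/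
def GoodSet (P : Type*) [PartialOrder P] [OrderBot P] (C : Set P) : Prop :=
  C = ∅ ∨ C = {⊥} ∨ (C.Nonempty ∧ ⊥ ∉ C ∧ IsAntichain (· ≤ ·) C)

lemma antichain_cases {A : Set P} (hA : IsAntichain (· ≤ ·) A) :
    A = ∅ ∨ A = {⊥} ∨ (A.Nonempty ∧ ⊥ ∉ A) := by
  rcases Set.eq_empty_or_nonempty A with h | h
  · exact Or.inl h
  by_cases hb : ⊥ ∈ A
  · refine Or.inr (Or.inl ?_)
    apply subset_antisymm _ (by simpa using hb)
    intro a ha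
    simp only [Set.mem_singleton_iff]
    by_contra hne
    exact hA hb ha (Ne.symm hne) bot_le
  · exact Or.inr (Or.inr ⟨h, hb⟩)

lemma J_props {A : Set P} (hne : A.Nonempty) (hb : ⊥ ∉ A) :
    (J P A).Nonempty ∧ ⊥ ∉ J P A ∧ inters P A = J P A := by
  obtain ⟨a, ha⟩ := hne
  have haB : a ≠ ⊥ := fun h => hb (h ▸ ha)
  refine ⟨⟨⊤, top_mem_J A⟩, bot_not_mem_J ⟨a, ha, haB⟩, ?_⟩
  exact inters_eq_J (Set.nonempty_iff_ne_empty.mp ⟨a, ha⟩)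
    (fun h => haB (by rw [h] at ha; exact ha))

lemma good_of_ne_props {C : Set P} (hne : C.Nonempty) (hb : ⊥ ∉ C) :
    GoodSet P (bmap P C) ∧ (bmap P C).Nonempty ∧ ⊥ ∉ bmap P C := by
  obtain ⟨hJne, hJb, hIJ⟩ := J_props hne hb
  have h1 : bmap P C = minsOf P (J P C) := by rw [bmap, hIJ]
  rw [h1]
  obtain ⟨x, hx⟩ := hJne
  obtain ⟨y, hy, -⟩ := exists_minimal_le_of_mem hx
  have hne' : (minsOf P (J P C)).Nonempty := ⟨y, hy⟩
  have hb' : ⊥ ∉ minsOf P (J P C) := fun h => hJb (minsOf_subset _ h)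
  exact ⟨Or.inr (Or.inr ⟨hne', hb', minsOf_antichain _⟩), hne', hb'⟩

/-- Master lemma: for `B` in the image of the blocker map on antichains,
`inters (bmap B) = upFilter B` (i.e. `b ∘ b = id` on the image, filter form). -/
lemma master {A : Set P} (hA : IsAntichain (· ≤ ·) A) :
    inters P (bmap P (bmap P A)) = upFilter P (bmap P A) ∧ GoodSet P (bmap P (bmap P A)) := by
  rcases antichain_cases hA with rfl | rfl | ⟨hne, hb⟩
  · -- A = ∅, B = {⊥}, bmap B = ∅
    rw [bmap_empty, bmap_bot, inters_empty]
    refine ⟨?_, Or.inl rfl⟩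
    ext x
    simp only [Set.mem_univ, true_iff, upFilter, Set.mem_setOf_eq]
    exact ⟨⊥, rfl, bot_le⟩
  · -- A = {⊥}, B = ∅, bmap B = {⊥}
    rw [bmap_bot, bmap_empty, inters_bot]
    refine ⟨?_, Or.inr (Or.inl rfl)⟩
    ext x
    simp only [Set.mem_empty_iff_false, false_iff, upFilter, Set.mem_setOf_eq]
    rintro ⟨s, hs, -⟩
    exact hs
  · -- generic case
    obtain ⟨hJAne, hJAb, hIJA⟩ := J_props hne hb
    have hAne' : ∃ s ∈ A, s ≠ ⊥ := by
      obtain ⟨a, ha⟩ := hne; exact ⟨a, ha, fun h => hb (h ▸ ha)⟩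
    have hFB : upFilter P (bmap P A) = J P A := by
      rw [bmap, hIJA]
      exact upFilter_minsOf_of_upset (fun x hx y hxy => J_upset hx hxy)
    obtain ⟨-, hBne, hBb⟩ := good_of_ne_props hne hb
    obtain ⟨hJBne, hJBb, hIJB⟩ := J_props hBne hBb
    have hJB : J P (bmap P A) = J P (J P A) := by rw [bmap, hIJA, J_minsOf hJAb]
    have hbB : bmap P (bmap P A) = minsOf P (J P (J P A)) := by rw [bmap, hIJB, hJB]
    have hJJAb : ⊥ ∉ J P (J P A) := by
      obtain ⟨w, hw⟩ := hJAne
      exact bot_not_mem_J ⟨w, hw, fun h => hJAb (h ▸ hw)⟩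
    obtain ⟨hMne, hMb⟩ : (minsOf P (J P (J P A))).Nonempty ∧ ⊥ ∉ minsOf P (J P (J P A)) := by
      obtain ⟨y, hy, -⟩ := exists_minimal_le_of_mem (top_mem_J (S := J P A))
      exact ⟨⟨y, hy⟩, fun h => hJJAb (minsOf_subset _ h)⟩
    obtain ⟨-, -, hIM⟩ := J_props hMne hMb
    constructor
    · rw [hbB, hIM, J_minsOf hJJAb, JJJ hAne', hFB]
    · rw [hbB]
      exact Or.inr (Or.inr ⟨hMne, hMb, minsOf_antichain _⟩)

lemma inters_minsOf_union {C₁ C₂ : Set P} (h₁ : GoodSet P C₁) (h₂ : GoodSet P C₂) :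
    inters P (minsOf P (C₁ ∪ C₂)) = inters P C₁ ∩ inters P C₂ := by
  rcases h₁ with rfl | rfl | ⟨hne1, hb1, hac1⟩ <;>
    rcases h₂ with rfl | rfl | ⟨hne2, hb2, hac2⟩
  · rw [Set.empty_union, minsOf_empty, inters_empty, Set.univ_inter]
  · rw [Set.empty_union, minsOf_bot_mem (S := {⊥}) (Set.mem_singleton _), inters_bot, inters_empty, Set.univ_inter]
  · rw [Set.empty_union, minsOf_of_antichain hac2, inters_empty, Set.univ_inter]
  · rw [Set.union_empty, minsOf_bot_mem (S := {⊥}) (Set.mem_singleton _), inters_bot, inters_empty, Set.inter_univ]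
  · rw [Set.union_self, minsOf_bot_mem (S := {⊥}) (Set.mem_singleton _), inters_bot, Set.inter_self]
  · rw [minsOf_bot_mem (Set.mem_union_left _ (Set.mem_singleton _)), inters_bot, Set.empty_inter]
  · rw [Set.union_empty, minsOf_of_antichain hac1, inters_empty, Set.inter_univ]
  · rw [minsOf_bot_mem (Set.mem_union_right _ (Set.mem_singleton _)), inters_bot, Set.inter_empty]
  · -- both generic
    have hUb : ⊥ ∉ C₁ ∪ C₂ := by rintro (h | h); exacts [hb1 h, hb2 h]
    obtain ⟨hMne, hMb⟩ : (minsOf P (C₁ ∪ C₂)).Nonempty ∧ ⊥ ∉ minsOf P (C₁ ∪ C₂) := by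
      obtain ⟨x, hx⟩ := hne1
      obtain ⟨y, hy, -⟩ := exists_minimal_le_of_mem (Set.mem_union_left _ hx)
      exact ⟨⟨y, hy⟩, fun h => hUb (minsOf_subset _ h)⟩
    obtain ⟨-, -, hIM⟩ := J_props hMne hMb
    obtain ⟨-, -, hI1⟩ := J_props hne1 hb1
    obtain ⟨-, -, hI2⟩ := J_props hne2 hb2
    rw [hIM, J_minsOf hUb, J_union, hI1, hI2]

end Main

theorem stmt_16 {P : Type*} [PartialOrder P] [BoundedOrder P] [Fintype P] [Nontrivial P]
    (B₁ B₂ : Set P)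
    (h1 : ∃ A : Set P, IsAntichain (· ≤ ·) A ∧ bmap P A = B₁)
    (h2 : ∃ A : Set P, IsAntichain (· ≤ ·) A ∧ bmap P A = B₂) :
    (∃ A : Set P, IsAntichain (· ≤ ·) A ∧
      bmap P A = minsOf P (upFilter P B₁ ∩ upFilter P B₂)) ∧
    minsOf P (upFilter P B₁ ∩ upFilter P B₂) =
      bmap P (minsOf P (bmap P B₁ ∪ bmap P B₂)) := by
  obtain ⟨A₁, hA₁, rfl⟩ := h1
  obtain ⟨A₂, hA₂, rfl⟩ := h2
  obtain ⟨hM1, hG1⟩ := master hA₁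
  obtain ⟨hM2, hG2⟩ := master hA₂
  have key : upFilter P (bmap P A₁) ∩ upFilter P (bmap P A₂)
      = inters P (minsOf P (bmap P (bmap P A₁) ∪ bmap P (bmap P A₂))) := by
    rw [inters_minsOf_union hG1 hG2, hM1, hM2]
  have second : minsOf P (upFilter P (bmap P A₁) ∩ upFilter P (bmap P A₂))
      = bmap P (minsOf P (bmap P (bmap P A₁) ∪ bmap P (bmap P A₂))) := by
    rw [key]
    rfl
  exact ⟨⟨_, minsOf_antichain _, second.symm⟩, second⟩
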